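/- Let d ≥ 1, 1 ≤ p < ∞, and M₁ > 0. Let ρ : ℝ^d → ℝ be differentiable with ‖Dρ(y)‖ ≤ M₁/2 for all y ∈ ℝ^d. Let A, A' ⊆ ℝ^d be measurable sets such that y − (ρ(y)/M₁) w ∈ A' for every y ∈ A and every w in the closed unit ball B₁ ⊆ ℝ^d. Let φ : ℝ^d → [0,∞) be integrable with support contained in B₁. Suppose g : ℝ^d → ℝ is continuously differentiable with bounded derivative and ‖Dg‖_{L_p(A')} < ∞. Then the mollification g̃(y) := ∫_{B₁} g(y − (ρ(y)/M₁) w) φ(w) dw is differentiable on ℝ^d and ‖Dg̃‖_{L_p(A)} ≤ (3/2) · 2^{1/p} ‖φ‖_{L_1(ℝ^d)} ‖Dg‖_{L_p(A')}. -/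

import Mathlib

open MeasureTheory

set_option synthInstance.maxHeartbeats 1000000
set_option maxHeartbeats 1000000
open MeasureTheory
open scoped ENNReal NNReal

lemma aux_det {d : ℕ} (c : EuclideanSpace ℝ (Fin d) →L[ℝ] ℝ) (w : EuclideanSpace ℝ (Fin d)) :
    (ContinuousLinearMap.id ℝ (EuclideanSpace ℝ (Fin d)) - c.smulRight w).det = 1 - c w := by
  classical
  set b := (EuclideanSpace.basisFun (Fin d) ℝ).toBasis with hb
  have : (ContinuousLinearMap.id ℝ (EuclideanSpace ℝ (Fin d)) - c.smulRight w
      : EuclideanSpace ℝ (Fin d) →ₗ[ℝ] EuclideanSpace ℝ (Fin d)).det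
      = 1 - c w := by
    rw [← LinearMap.det_toMatrix b]
    have hmat : (LinearMap.toMatrix b b
        ((ContinuousLinearMap.id ℝ (EuclideanSpace ℝ (Fin d)) - c.smulRight w
          : EuclideanSpace ℝ (Fin d) →ₗ[ℝ] EuclideanSpace ℝ (Fin d))))
        = 1 + Matrix.replicateCol (Fin 1) (fun i => -(w i)) * Matrix.replicateRow (Fin 1) (fun j => c (b j)) := by
      ext i j
      simp [LinearMap.toMatrix_apply, Matrix.mul_apply, Matrix.one_apply,
        ContinuousLinearMap.smulRight_apply, map_sub, _root_.map_smul, Module.Basis.repr_self,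
        Finsupp.single_apply, hb, mul_comm, sub_eq_add_neg]
    rw [hmat]; erw [Matrix.det_one_add_replicateCol_mul_replicateRow (ι := Fin 1)]
    have hw : c w = ∑ j, w j * c (b j) := by
      conv_lhs => rw [← b.sum_repr w]
      simp [hb, _root_.map_smul, mul_comm]
    rw [hw]
    simp only [dotProduct, mul_neg, Finset.sum_neg_distrib, sub_eq_add_neg]
    ring_nf
    congr 1
    apply Finset.sum_congr rfl
    intro j _
    ring
  exact this

noncomputable section
variable {d : ℕ} {M₁ : ℝ}

-- derivative matrix S
def Smap (M₁ : ℝ) (ρ : EuclideanSpace ℝ (Fin d) → ℝ) (y w : EuclideanSpace ℝ (Fin d)) :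
    EuclideanSpace ℝ (Fin d) →L[ℝ] EuclideanSpace ℝ (Fin d) :=
  ContinuousLinearMap.id ℝ _ - (M₁⁻¹ • fderiv ℝ ρ y).smulRight w

lemma hasFDerivAt_T (hM₁ : 0 < M₁) (ρ : EuclideanSpace ℝ (Fin d) → ℝ)
    (hρ : Differentiable ℝ ρ) (y w : EuclideanSpace ℝ (Fin d)) :
    HasFDerivAt (fun x => x - (ρ x / M₁) • w) (Smap M₁ ρ y w) y := by
  have h1 : HasFDerivAt (fun x => (ρ x / M₁) • w) ((M₁⁻¹ • fderiv ℝ ρ y).smulRight w) y := by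
    have h2 : HasFDerivAt (fun x => ρ x / M₁) (M₁⁻¹ • fderiv ℝ ρ y) y := by
      have := (hρ y).hasFDerivAt.const_smul (M₁⁻¹)
      have heq : (fun x => ρ x / M₁) = M₁⁻¹ • ρ := by
        funext x; simp only [Pi.smul_apply, smul_eq_mul]; ring
      rw [heq]; exact this
    exact h2.smul_const w
  exact (hasFDerivAt_id y).sub h1

lemma Smap_norm_le (hM₁ : 0 < M₁) (ρ : EuclideanSpace ℝ (Fin d) → ℝ)
    (hρ' : ∀ y, ‖fderiv ℝ ρ y‖ ≤ M₁ / 2) (y : EuclideanSpace ℝ (Fin d))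
    {w : EuclideanSpace ℝ (Fin d)} (hw : ‖w‖ ≤ 1) :
    ‖Smap M₁ ρ y w‖ ≤ 3 / 2 := by
  have h1 : ‖(M₁⁻¹ • fderiv ℝ ρ y).smulRight w‖ ≤ 1 / 2 := by
    rw [ContinuousLinearMap.norm_smulRight_apply, norm_smul]
    have : ‖M₁⁻¹‖ * ‖fderiv ℝ ρ y‖ ≤ M₁⁻¹ * (M₁ / 2) := by
      rw [Real.norm_eq_abs, abs_of_pos (inv_pos.2 hM₁)]
      exact mul_le_mul_of_nonneg_left (hρ' y) (inv_pos.2 hM₁).le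
    calc ‖M₁⁻¹‖ * ‖fderiv ℝ ρ y‖ * ‖w‖ ≤ (M₁⁻¹ * (M₁ / 2)) * 1 := by
          apply mul_le_mul this hw (norm_nonneg _)
          positivity
      _ = 1 / 2 := by field_simp
  calc ‖Smap M₁ ρ y w‖ ≤ ‖ContinuousLinearMap.id ℝ (EuclideanSpace ℝ (Fin d))‖
        + ‖(M₁⁻¹ • fderiv ℝ ρ y).smulRight w‖ := norm_sub_le _ _
    _ ≤ 1 + 1/2 := add_le_add ContinuousLinearMap.norm_id_le h1
    _ = 3/2 := by norm_num
end

noncomputable section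
variable {d : ℕ} {M₁ : ℝ}

lemma Smap_det_ge (hM₁ : 0 < M₁) (ρ : EuclideanSpace ℝ (Fin d) → ℝ)
    (hρ' : ∀ y, ‖fderiv ℝ ρ y‖ ≤ M₁ / 2) (y : EuclideanSpace ℝ (Fin d))
    {w : EuclideanSpace ℝ (Fin d)} (hw : ‖w‖ ≤ 1) :
    (1:ℝ)/2 ≤ |(Smap M₁ ρ y w).det| := by
  have hdet : (Smap M₁ ρ y w).det = 1 - (M₁⁻¹ • fderiv ℝ ρ y) w :=
    aux_det (M₁⁻¹ • fderiv ℝ ρ y) w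
  have hb : |(M₁⁻¹ • fderiv ℝ ρ y) w| ≤ 1/2 := by
    have h1 : ‖(M₁⁻¹ • fderiv ℝ ρ y) w‖ ≤ ‖M₁⁻¹ • fderiv ℝ ρ y‖ * ‖w‖ :=
      (M₁⁻¹ • fderiv ℝ ρ y).le_opNorm w
    have h2 : ‖M₁⁻¹ • fderiv ℝ ρ y‖ ≤ M₁⁻¹ * (M₁/2) := by
      rw [norm_smul, Real.norm_eq_abs, abs_of_pos (inv_pos.2 hM₁)]
      exact mul_le_mul_of_nonneg_left (hρ' y) (inv_pos.2 hM₁).le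
    have : M₁⁻¹ * (M₁/2) = 1/2 := by field_simp
    calc |(M₁⁻¹ • fderiv ℝ ρ y) w| ≤ ‖M₁⁻¹ • fderiv ℝ ρ y‖ * ‖w‖ := h1
      _ ≤ (1/2) * 1 := by
          apply mul_le_mul (this ▸ h2) hw (norm_nonneg _); norm_num
      _ = 1/2 := by norm_num
  rw [hdet]
  rw [abs_le] at hb
  rw [abs_of_nonneg (by linarith)]
  linarith
end

noncomputable section
open Metric in
lemma gtilde_hasFDerivAt {d : ℕ} {M₁ : ℝ} (hM₁ : 0 < M₁)
    (ρ : EuclideanSpace ℝ (Fin d) → ℝ) (hρ : Differentiable ℝ ρ)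
    (hρ' : ∀ y, ‖fderiv ℝ ρ y‖ ≤ M₁ / 2)
    (φ : EuclideanSpace ℝ (Fin d) → ℝ) (hφint : Integrable φ)
    (g : EuclideanSpace ℝ (Fin d) → ℝ) (hg : ContDiff ℝ 1 g)
    {C : ℝ} (hgbd : ∀ y, ‖fderiv ℝ g y‖ ≤ C)
    (y : EuclideanSpace ℝ (Fin d)) :
    HasFDerivAt (fun x => ∫ w in closedBall (0 : EuclideanSpace ℝ (Fin d)) 1,
        g (x - (ρ x / M₁) • w) * φ w)
      (∫ w in closedBall (0 : EuclideanSpace ℝ (Fin d)) 1,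
        φ w • ((fderiv ℝ g (y - (ρ y / M₁) • w)).comp (Smap M₁ ρ y w))) y := by
  have hC : 0 ≤ C := le_trans (norm_nonneg _) (hgbd y)
  have hgdiff : Differentiable ℝ g := hg.differentiable one_ne_zero
  have hgcont : Continuous g := hgdiff.continuous
  have hg'cont : Continuous (fderiv ℝ g) := hg.continuous_fderiv one_ne_zero
  have hglip : ∀ a b : EuclideanSpace ℝ (Fin d), ‖g a - g b‖ ≤ C * ‖a - b‖ := fun a b =>
    convex_univ.norm_image_sub_le_of_norm_fderiv_le (fun x _ => hgdiff x) (fun x _ => hgbd x)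
      (Set.mem_univ b) (Set.mem_univ a)
  set B := closedBall (0 : EuclideanSpace ℝ (Fin d)) 1 with hB
  have hφm : AEStronglyMeasurable φ (volume.restrict B) := hφint.1.restrict
  have contT : ∀ x : EuclideanSpace ℝ (Fin d), Continuous fun w : EuclideanSpace ℝ (Fin d) =>
      x - (ρ x / M₁) • w := fun x => continuous_const.sub (continuous_const_smul _)
  apply hasFDerivAt_integral_of_dominated_of_fderiv_le
    (F' := fun x w => φ w • ((fderiv ℝ g (x - (ρ x / M₁) • w)).comp (Smap M₁ ρ x w)))
    (bound := fun w => 3/2 * C * |φ w|) (Metric.ball_mem_nhds y one_pos)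
  · filter_upwards with x
    exact ((hgcont.comp (contT x)).aestronglyMeasurable.mul hφm)
  · -- integrability of F y
    apply Integrable.mono' ((hφint.abs.const_mul (|g y| + C * |ρ y / M₁|)).restrict (s := B))
    · exact (hgcont.comp (contT y)).aestronglyMeasurable.mul hφm
    · filter_upwards [ae_restrict_mem (measurableSet_closedBall)] with w hw
      have hw1 : ‖w‖ ≤ 1 := by simpa [hB, mem_closedBall, dist_eq_norm] using hw
      rw [norm_mul]
      have h1 : ‖g (y - (ρ y / M₁) • w)‖ ≤ |g y| + C * |ρ y / M₁| := by
        have := hglip (y - (ρ y / M₁) • w) y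
        have h2 : ‖y - (ρ y / M₁) • w - y‖ ≤ |ρ y / M₁| := by
          rw [sub_sub_cancel_left, norm_neg, norm_smul, Real.norm_eq_abs]
          calc |ρ y / M₁| * ‖w‖ ≤ |ρ y / M₁| * 1 :=
            mul_le_mul_of_nonneg_left hw1 (abs_nonneg _)
          _ = _ := mul_one _
        calc ‖g (y - (ρ y / M₁) • w)‖
            ≤ ‖g y‖ + ‖g (y - (ρ y / M₁) • w) - g y‖ := by
              simpa using norm_add_le (g y) (g (y - (ρ y / M₁) • w) - g y)
          _ ≤ |g y| + C * ‖y - (ρ y / M₁) • w - y‖ :=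
              add_le_add (le_of_eq (Real.norm_eq_abs _)) this
          _ ≤ |g y| + C * |ρ y / M₁| :=
              add_le_add_right (mul_le_mul_of_nonneg_left h2 hC) _
      calc ‖g (y - (ρ y / M₁) • w)‖ * ‖φ w‖ ≤ (|g y| + C * |ρ y / M₁|) * |φ w| :=
            mul_le_mul h1 (le_of_eq (Real.norm_eq_abs _)) (norm_nonneg _) (by positivity)
        _ = _ := rfl
  · -- measurability of F' y
    apply AEStronglyMeasurable.smul hφm
    apply Continuous.aestronglyMeasurable
    apply Continuous.clm_comp (hg'cont.comp (contT y))
    exact continuous_const.sub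
      ((ContinuousLinearMap.smulRightL ℝ _ _ (M₁⁻¹ • fderiv ℝ ρ y)).continuous)
  · -- bound
    filter_upwards [ae_restrict_mem (measurableSet_closedBall)] with w hw x _
    have hw1 : ‖w‖ ≤ 1 := by simpa [hB, mem_closedBall, dist_eq_norm] using hw
    refine le_trans (ContinuousLinearMap.opNorm_smul_le _ _) ?_
    rw [Real.norm_eq_abs]
    calc |φ w| * ‖(fderiv ℝ g (x - (ρ x / M₁) • w)).comp (Smap M₁ ρ x w)‖
        ≤ |φ w| * (C * (3/2)) := by
          gcongr
          calc ‖(fderiv ℝ g (x - (ρ x / M₁) • w)).comp (Smap M₁ ρ x w)‖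
              ≤ ‖fderiv ℝ g (x - (ρ x / M₁) • w)‖ * ‖Smap M₁ ρ x w‖ :=
                ContinuousLinearMap.opNorm_comp_le _ _
            _ ≤ C * (3/2) := mul_le_mul (hgbd _) (Smap_norm_le hM₁ ρ hρ' x hw1)
                (norm_nonneg _) hC
      _ = 3/2 * C * |φ w| := by ring
  · exact (hφint.abs.const_mul _).restrict
  · -- differentiability
    filter_upwards with w x _
    exact ((hgdiff _).hasFDerivAt.comp x (hasFDerivAt_T hM₁ ρ hρ x w)).mul_const (φ w)
end


/-- Gradient bound of Lemma 4.3 (mollification using the regularized distance):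
under the same setup as the `L_p` bound, if `g` is `C¹` with bounded derivative and
`‖Dg‖_{L_p(A')} < ∞`, then `g̃(y) = ∫_{B₁} g(y - (ρ(y)/M₁) w) φ(w) dw` is
differentiable and `‖Dg̃‖_{L_p(A)} ≤ (3/2) · 2^{1/p} ‖φ‖_{L_1} ‖Dg‖_{L_p(A')}`. -/
theorem mollification_gradient_bound (d : ℕ) (hd : 1 ≤ d) (p : ℝ) (hp : 1 ≤ p)
    (M₁ : ℝ) (hM₁ : 0 < M₁)
    (ρ : EuclideanSpace ℝ (Fin d) → ℝ) (hρ : Differentiable ℝ ρ)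
    (hρ' : ∀ y, ‖fderiv ℝ ρ y‖ ≤ M₁ / 2)
    (A A' : Set (EuclideanSpace ℝ (Fin d)))
    (hA : MeasurableSet A) (hA' : MeasurableSet A')
    (hAA' : ∀ y ∈ A, ∀ w ∈ Metric.closedBall (0 : EuclideanSpace ℝ (Fin d)) 1,
      y - (ρ y / M₁) • w ∈ A')
    (φ : EuclideanSpace ℝ (Fin d) → ℝ) (hφint : Integrable φ)
    (hφ0 : ∀ w, 0 ≤ φ w)
    (hφsupp : Function.support φ ⊆ Metric.closedBall (0 : EuclideanSpace ℝ (Fin d)) 1)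
    (g : EuclideanSpace ℝ (Fin d) → ℝ) (hg : ContDiff ℝ 1 g)
    (hgbd : ∃ C : ℝ, ∀ y, ‖fderiv ℝ g y‖ ≤ C)
    (hDgLp : eLpNorm (fun y => ‖fderiv ℝ g y‖) (ENNReal.ofReal p)
      (volume.restrict A') < ⊤)
    (gtilde : EuclideanSpace ℝ (Fin d) → ℝ)
    (hgtilde : gtilde = fun y => ∫ w in Metric.closedBall (0 : EuclideanSpace ℝ (Fin d)) 1,
      g (y - (ρ y / M₁) • w) * φ w) :
    Differentiable ℝ gtilde ∧
    eLpNorm (fun y => ‖fderiv ℝ gtilde y‖) (ENNReal.ofReal p) (volume.restrict A)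
      ≤ ENNReal.ofReal ((3 / 2) * 2 ^ (1 / p)) * eLpNorm φ 1 volume *
        eLpNorm (fun y => ‖fderiv ℝ g y‖) (ENNReal.ofReal p) (volume.restrict A') := by
  obtain ⟨C, hgbd⟩ := hgbd
  have hC : 0 ≤ C := le_trans (norm_nonneg _) (hgbd 0)
  have hp0 : 0 < p := lt_of_lt_of_le one_pos hp
  set B := Metric.closedBall (0 : EuclideanSpace ℝ (Fin d)) 1 with hB
  set g' := fderiv ℝ g with hg'
  set s := fun y : EuclideanSpace ℝ (Fin d) => ρ y / M₁ with hs
  -- differentiability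
  have hasF : ∀ y, HasFDerivAt gtilde
      (∫ w in B, φ w • ((g' (y - s y • w)).comp (Smap M₁ ρ y w))) y := by
    intro y
    rw [hgtilde]
    exact gtilde_hasFDerivAt hM₁ ρ hρ hρ' φ hφint g hg hgbd y
  have hdiffble : Differentiable ℝ gtilde := fun y => (hasF y).differentiableAt
  refine ⟨hdiffble, ?_⟩
  -- continuity facts
  have hg'cont : Continuous g' := hg.continuous_fderiv one_ne_zero
  have contT : ∀ x : EuclideanSpace ℝ (Fin d), Continuous fun w : EuclideanSpace ℝ (Fin d) =>
      x - s x • w := fun x => continuous_const.sub (continuous_const_smul _)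
  have hφm : AEStronglyMeasurable φ (volume.restrict B) := hφint.1.restrict
  -- pointwise real bound
  have hPint : ∀ y, Integrable (fun w => 3/2 * (φ w * ‖g' (y - s y • w)‖))
      (volume.restrict B) := by
    intro y
    apply Integrable.mono' ((hφint.abs.const_mul (3/2 * C)).restrict (s := B))
    · exact (hφm.mul ((hg'cont.comp (contT y)).norm).aestronglyMeasurable).const_mul (3/2)
    · filter_upwards with w
      have h0 : (0:ℝ) ≤ φ w * ‖g' (y - s y • w)‖ := mul_nonneg (hφ0 w) (norm_nonneg _)
      rw [Real.norm_of_nonneg (by positivity)]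
      have h1 : φ w * ‖g' (y - s y • w)‖ ≤ φ w * C :=
        mul_le_mul_of_nonneg_left (hgbd _) (hφ0 w)
      have h2 : |φ w| = φ w := abs_of_nonneg (hφ0 w)
      nlinarith [hφ0 w]
  have hP : ∀ y, ‖fderiv ℝ gtilde y‖ ≤ ∫ w in B, 3/2 * (φ w * ‖g' (y - s y • w)‖) := by
    intro y
    rw [(hasF y).fderiv]
    apply norm_integral_le_of_norm_le (hPint y)
    filter_upwards [ae_restrict_mem measurableSet_closedBall] with w hw
    have hw1 : ‖w‖ ≤ 1 := by simpa [hB, Metric.mem_closedBall, dist_eq_norm] using hw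
    calc ‖φ w • (g' (y - s y • w)).comp (Smap M₁ ρ y w)‖
        ≤ ‖φ w‖ * ‖(g' (y - s y • w)).comp (Smap M₁ ρ y w)‖ :=
          ContinuousLinearMap.opNorm_smul_le _ _
      _ ≤ ‖φ w‖ * (‖g' (y - s y • w)‖ * ‖Smap M₁ ρ y w‖) :=
          mul_le_mul_of_nonneg_left (ContinuousLinearMap.opNorm_comp_le _ _) (norm_nonneg _)
      _ ≤ ‖φ w‖ * (‖g' (y - s y • w)‖ * (3/2)) := by
          have := Smap_norm_le hM₁ ρ hρ' y hw1
          gcongr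
      _ = 3/2 * (φ w * ‖g' (y - s y • w)‖) := by
          rw [Real.norm_of_nonneg (hφ0 w)]; ring
  -- ENNReal quantities
  set φe := fun w => ENNReal.ofReal (φ w) with hφe
  set Ge := fun (y w : EuclideanSpace ℝ (Fin d)) => (‖g' (y - s y • w)‖₊ : ℝ≥0∞) with hGe
  set Φ := ∫⁻ w in B, φe w with hΦdef
  set Np := ∫⁻ z in A', (‖g' z‖₊ : ℝ≥0∞) ^ p with hNp
  set I := fun y => ∫⁻ w in B, φe w * Ge y w with hI
  set J := fun y => ∫⁻ w in B, φe w * (Ge y w) ^ p with hJ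
  have hφe_m : AEMeasurable φe (volume.restrict B) :=
    ENNReal.measurable_ofReal.comp_aemeasurable hφint.1.aemeasurable.restrict
  have hφnn : ∀ w, (‖φ w‖₊ : ℝ≥0∞) = φe w := fun w =>
    Real.enorm_eq_ofReal (hφ0 w)
  have hΦfin : Φ ≠ ⊤ := by
    have h1 : Φ ≤ ∫⁻ w, φe w := setLIntegral_le_lintegral _ _
    have h2 : ∫⁻ w, φe w < ⊤ := by
      simp_rw [← hφnn]
      exact hφint.2
    exact (lt_of_le_of_lt h1 h2).ne
  have hΦ : eLpNorm φ 1 volume = Φ := by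
    rw [eLpNorm_one_eq_lintegral_enorm]
    simp_rw [enorm_eq_nnnorm, hφnn]
    rw [hΦdef, setLIntegral_eq_of_support_subset]
    intro w hw
    exact hφsupp (fun h0 => hw (by simp [hφe, h0]))
  -- pointwise ENNReal bound
  have stepA : ∀ y, (‖fderiv ℝ gtilde y‖₊ : ℝ≥0∞) ≤ ENNReal.ofReal (3/2) * I y := by
    intro y
    calc (‖fderiv ℝ gtilde y‖₊ : ℝ≥0∞) = ENNReal.ofReal ‖fderiv ℝ gtilde y‖ :=
          (ofReal_norm _).symm
      _ ≤ ENNReal.ofReal (∫ w in B, 3/2 * (φ w * ‖g' (y - s y • w)‖)) :=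
          ENNReal.ofReal_le_ofReal (hP y)
      _ = ∫⁻ w in B, ENNReal.ofReal (3/2 * (φ w * ‖g' (y - s y • w)‖)) :=
          ofReal_integral_eq_lintegral_ofReal (hPint y)
            (Filter.Eventually.of_forall fun w =>
              mul_nonneg (by norm_num) (mul_nonneg (hφ0 w) (norm_nonneg _)))
      _ = ∫⁻ w in B, ENNReal.ofReal (3/2) * (φe w * Ge y w) := by
          apply lintegral_congr
          intro w
          rw [ENNReal.ofReal_mul (by norm_num), ENNReal.ofReal_mul (hφ0 w),
            ofReal_norm, enorm_eq_nnnorm]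
      _ = ENNReal.ofReal (3/2) * I y := lintegral_const_mul' _ _ ENNReal.ofReal_ne_top
  -- Hölder
  have stepB : ∀ y, (I y) ^ p ≤ Φ ^ (p - 1) * J y := by
    intro y
    rcases eq_or_lt_of_le hp with hp1 | hp1
    · -- p = 1
      subst hp1
      simp only [ENNReal.rpow_one, sub_self, ENNReal.rpow_zero, one_mul, hI, hJ]
      exact le_rfl
    · -- 1 < p
      have hpq : p.HolderConjugate (Real.conjExponent p) := Real.HolderConjugate.conjExponent hp1
      set q := Real.conjExponent p with hq
      have hGm : Measurable fun w => Ge y w := by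
        apply Measurable.coe_nnreal_ennreal
        exact (hg'cont.comp (contT y)).nnnorm.measurable
      have hfm : AEMeasurable (fun w => φe w ^ (1/p) * Ge y w) (volume.restrict B) :=
        (hφe_m.pow_const _).mul hGm.aemeasurable
      have hgm2 : AEMeasurable (fun w => φe w ^ (1/q)) (volume.restrict B) :=
        hφe_m.pow_const _
      have hsplit : ∀ w, φe w * Ge y w
          = ((fun w => φe w ^ (1/p) * Ge y w) * (fun w => φe w ^ (1/q))) w := by
        intro w
        simp only [Pi.mul_apply]
        rw [mul_right_comm, ← ENNReal.rpow_add_of_nonneg _ _ (one_div_pos.mpr hp0).le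
          (one_div_pos.mpr hpq.symm.pos).le]
        rw [one_div, one_div, hpq.inv_add_inv_eq_one, ENNReal.rpow_one]
      have hold := ENNReal.lintegral_mul_le_Lp_mul_Lq (volume.restrict B) hpq hfm hgm2
      have h1 : ∫⁻ w in B, (fun w => φe w ^ (1/p) * Ge y w) w ^ p = J y := by
        apply lintegral_congr
        intro w
        rw [ENNReal.mul_rpow_of_nonneg _ _ hp0.le, ← ENNReal.rpow_mul,
          one_div, inv_mul_cancel₀ hp0.ne']
        simp
      have h2 : ∫⁻ w in B, (fun w => φe w ^ (1/q)) w ^ q = Φ := by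
        apply lintegral_congr
        intro w
        rw [← ENNReal.rpow_mul, one_div, inv_mul_cancel₀ hpq.symm.pos.ne']
        simp
      have hIle : I y ≤ J y ^ (1/p) * Φ ^ (1/q) := by
        rw [hI]
        calc ∫⁻ w in B, φe w * Ge y w
            = ∫⁻ w in B, ((fun w => φe w ^ (1/p) * Ge y w) * (fun w => φe w ^ (1/q))) w :=
              lintegral_congr hsplit
          _ ≤ _ := by rw [← h1, ← h2]; exact hold
      have hq1 : 1/q = 1 - 1/p := by
        have := hpq.inv_add_inv_eq_one
        rw [one_div, one_div]
        linarith
      have hq2 : 1/q * p = p - 1 := by rw [hq1]; field_simp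
      calc (I y) ^ p ≤ (J y ^ (1/p) * Φ ^ (1/q)) ^ p := ENNReal.rpow_le_rpow hIle hp0.le
        _ = J y ^ (1/p * p) * Φ ^ (1/q * p) := by
            rw [ENNReal.mul_rpow_of_nonneg _ _ hp0.le, ← ENNReal.rpow_mul, ← ENNReal.rpow_mul]
        _ = Φ ^ (p - 1) * J y := by
            rw [one_div, inv_mul_cancel₀ hp0.ne', ENNReal.rpow_one, hq2, mul_comm]
  -- change of variables
  have hρlip : ∀ a b : EuclideanSpace ℝ (Fin d), ‖ρ a - ρ b‖ ≤ M₁/2 * ‖a - b‖ := fun a b =>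
    convex_univ.norm_image_sub_le_of_norm_fderiv_le (fun x _ => hρ x) (fun x _ => hρ' x)
      (Set.mem_univ b) (Set.mem_univ a)
  have stepC : ∀ w ∈ B, ∫⁻ y in A, (Ge y w) ^ p ≤ 2 * Np := by
    intro w hw
    have hw1 : ‖w‖ ≤ 1 := by simpa [hB, Metric.mem_closedBall, dist_eq_norm] using hw
    set T := fun y : EuclideanSpace ℝ (Fin d) => y - s y • w with hT
    have hTderiv : ∀ y ∈ A, HasFDerivWithinAt T (Smap M₁ ρ y w) A y := fun y _ =>
      (hasFDerivAt_T hM₁ ρ hρ y w).hasFDerivWithinAt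
    have hTinj : Set.InjOn T A := by
      intro a _ b _ hab
      have h1 : a - b = ((ρ a - ρ b)/M₁) • w := by
        have h2 : a - s a • w = b - s b • w := hab
        have : a - b = (s a - s b) • w := by
          rw [sub_smul]
          exact sub_eq_sub_iff_sub_eq_sub.mpr h2
        rw [this, hs]
        ring_nf
      by_contra hne
      have hpos : 0 < ‖a - b‖ := by
        simpa [norm_pos_iff, sub_eq_zero] using hne
      have : ‖a - b‖ ≤ 1/2 * ‖a - b‖ := by
        calc ‖a - b‖ = ‖((ρ a - ρ b)/M₁) • w‖ := by rw [← h1]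
          _ = ‖ρ a - ρ b‖/M₁ * ‖w‖ := by
              rw [norm_smul, Real.norm_eq_abs, abs_div, abs_of_pos hM₁,
                Real.norm_eq_abs]
          _ ≤ (M₁/2 * ‖a - b‖)/M₁ * 1 := by
              gcongr
              exact hρlip a b
          _ = 1/2 * ‖a - b‖ := by field_simp
      linarith
    have him : T '' A ⊆ A' := by
      rintro _ ⟨y, hy, rfl⟩
      exact hAA' y hy w hw
    have hdet : ∀ y, (1:ℝ≥0∞) ≤ 2 * ENNReal.ofReal |(Smap M₁ ρ y w).det| := by
      intro y
      have h1 := Smap_det_ge hM₁ ρ hρ' y hw1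
      calc (1:ℝ≥0∞) = 2 * ENNReal.ofReal (1/2) := by
            rw [show ((2:ℝ≥0∞)) = ENNReal.ofReal 2 by simp, ← ENNReal.ofReal_mul (by norm_num)]
            norm_num
        _ ≤ 2 * ENNReal.ofReal |(Smap M₁ ρ y w).det| := by
            exact mul_le_mul_right (ENNReal.ofReal_le_ofReal h1) _
    calc ∫⁻ y in A, (Ge y w) ^ p
        ≤ ∫⁻ y in A, 2 * (ENNReal.ofReal |(Smap M₁ ρ y w).det| * (‖g' (T y)‖₊ : ℝ≥0∞) ^ p) := by
          apply lintegral_mono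
          intro y
          calc (Ge y w) ^ p = 1 * ((‖g' (T y)‖₊ : ℝ≥0∞) ^ p) := by rw [one_mul]
            _ ≤ (2 * ENNReal.ofReal |(Smap M₁ ρ y w).det|) * ((‖g' (T y)‖₊ : ℝ≥0∞) ^ p) :=
              mul_le_mul_left (hdet y) _
            _ = 2 * (ENNReal.ofReal |(Smap M₁ ρ y w).det| * (‖g' (T y)‖₊ : ℝ≥0∞) ^ p) := by
              rw [mul_assoc]
      _ = 2 * ∫⁻ y in A, ENNReal.ofReal |(Smap M₁ ρ y w).det| * (‖g' (T y)‖₊ : ℝ≥0∞) ^ p :=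
          lintegral_const_mul' _ _ (by norm_num)
      _ = 2 * ∫⁻ z in T '' A, (‖g' z‖₊ : ℝ≥0∞) ^ p := by
          rw [lintegral_image_eq_lintegral_abs_det_fderiv_mul volume hA hTderiv hTinj
            (fun z => (‖g' z‖₊ : ℝ≥0∞) ^ p)]
      _ ≤ 2 * Np := by
          rw [hNp]
          exact mul_le_mul_right (lintegral_mono_set him) _
  -- Tonelli
  have stepD : ∫⁻ y in A, J y ≤ Φ * (2 * Np) := by
    have hjoint : AEMeasurable (Function.uncurry fun y w => φe w * (Ge y w) ^ p)
        ((volume.restrict A).prod (volume.restrict B)) := by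
      have h1 : AEMeasurable (fun z : EuclideanSpace ℝ (Fin d) × EuclideanSpace ℝ (Fin d) =>
          φe z.2) ((volume.restrict A).prod (volume.restrict B)) :=
        AEMeasurable.comp_snd hφe_m
      have h2 : Continuous (fun z : EuclideanSpace ℝ (Fin d) × EuclideanSpace ℝ (Fin d) =>
          (Ge z.1 z.2) ^ p) := by
        apply (ENNReal.continuous_rpow_const).comp
        apply (ENNReal.continuous_coe.comp ?_)
        apply Continuous.nnnorm
        apply hg'cont.comp
        exact continuous_fst.sub ((((hρ.continuous.comp continuous_fst).div_const M₁)).smul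
          continuous_snd)
      exact h1.mul h2.measurable.aemeasurable
    calc ∫⁻ y in A, J y = ∫⁻ w in B, ∫⁻ y in A, φe w * (Ge y w) ^ p :=
          lintegral_lintegral_swap hjoint
      _ = ∫⁻ w in B, φe w * ∫⁻ y in A, (Ge y w) ^ p := by
          apply lintegral_congr
          intro w
          exact lintegral_const_mul' _ _ ENNReal.ofReal_ne_top
      _ ≤ ∫⁻ w in B, φe w * (2 * Np) := by
          apply lintegral_mono_ae
          filter_upwards [ae_restrict_mem measurableSet_closedBall] with w hw
          exact mul_le_mul_right (stepC w hw) _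
      _ = Φ * (2 * Np) := lintegral_mul_const'' _ hφe_m
  -- combine
  have hφp : Φ ^ (p-1) * Φ = Φ ^ p := by
    calc Φ ^ (p-1) * Φ = Φ ^ (p-1) * Φ ^ (1:ℝ) := by rw [ENNReal.rpow_one]
      _ = Φ ^ (p-1+1) := (ENNReal.rpow_add_of_nonneg _ _ (by linarith) zero_le_one).symm
      _ = Φ ^ p := by ring_nf
  have key : ∫⁻ y in A, (‖fderiv ℝ gtilde y‖₊ : ℝ≥0∞) ^ p
      ≤ (ENNReal.ofReal (3/2)) ^ p * 2 * Φ ^ p * Np := by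
    calc ∫⁻ y in A, (‖fderiv ℝ gtilde y‖₊ : ℝ≥0∞) ^ p
        ≤ ∫⁻ y in A, (ENNReal.ofReal (3/2) * I y) ^ p :=
          lintegral_mono fun y => ENNReal.rpow_le_rpow (stepA y) hp0.le
      _ = ∫⁻ y in A, ENNReal.ofReal (3/2) ^ p * I y ^ p :=
          lintegral_congr fun y => ENNReal.mul_rpow_of_nonneg _ _ hp0.le
      _ = ENNReal.ofReal (3/2) ^ p * ∫⁻ y in A, I y ^ p :=
          lintegral_const_mul' _ _ (ENNReal.rpow_ne_top_of_nonneg hp0.le ENNReal.ofReal_ne_top)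
      _ ≤ ENNReal.ofReal (3/2) ^ p * ∫⁻ y in A, Φ ^ (p-1) * J y :=
          mul_le_mul_right (lintegral_mono fun y => stepB y) _
      _ = ENNReal.ofReal (3/2) ^ p * (Φ ^ (p-1) * ∫⁻ y in A, J y) := by
          rw [lintegral_const_mul' _ _ (ENNReal.rpow_ne_top_of_nonneg (by linarith) hΦfin)]
      _ ≤ ENNReal.ofReal (3/2) ^ p * (Φ ^ (p-1) * (Φ * (2 * Np))) :=
          mul_le_mul_right (mul_le_mul_right stepD _) _
      _ = ENNReal.ofReal (3/2) ^ p * ((Φ ^ (p-1) * Φ) * (2 * Np)) := by ring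
      _ = ENNReal.ofReal (3/2) ^ p * 2 * Φ ^ p * Np := by rw [hφp]; ring
  -- final algebra
  have hq0 : (ENNReal.ofReal p) ≠ 0 := ne_of_gt (ENNReal.ofReal_pos.mpr hp0)
  have hqt : (ENNReal.ofReal p) ≠ ⊤ := ENNReal.ofReal_ne_top
  rw [eLpNorm_eq_lintegral_rpow_enorm_toReal hq0 hqt, eLpNorm_eq_lintegral_rpow_enorm_toReal hq0 hqt,
    ENNReal.toReal_ofReal hp0.le, hΦ]
  simp_rw [enorm_norm]
  have hrhs : ENNReal.ofReal (3/2 * 2 ^ (1/p)) = ENNReal.ofReal (3/2) * 2 ^ (1/p) := by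
    rw [ENNReal.ofReal_mul (by norm_num), ← ENNReal.ofReal_rpow_of_pos two_pos]
    norm_num
  calc (∫⁻ y in A, (‖fderiv ℝ gtilde y‖₊ : ℝ≥0∞) ^ p) ^ (1/p)
      ≤ ((ENNReal.ofReal (3/2)) ^ p * 2 * Φ ^ p * Np) ^ (1/p) :=
        ENNReal.rpow_le_rpow key (by positivity)
    _ = ENNReal.ofReal (3/2) * 2 ^ (1/p) * Φ * Np ^ (1/p) := by
        rw [ENNReal.mul_rpow_of_nonneg _ _ (by positivity),
          ENNReal.mul_rpow_of_nonneg _ _ (by positivity),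
          ENNReal.mul_rpow_of_nonneg _ _ (by positivity),
          ← ENNReal.rpow_mul (ENNReal.ofReal (3/2)), ← ENNReal.rpow_mul Φ,
          mul_one_div_cancel hp0.ne', ENNReal.rpow_one, ENNReal.rpow_one]
    _ = ENNReal.ofReal (3/2 * 2 ^ (1/p)) * Φ * Np ^ (1/p) := by rw [hrhs]
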